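/- Let k ≥ 2, t = k − 1, and let y_1, …, y_k be nonnegative real numbers. Then for every j ∈ {1,…,k}: y_j · Σ_{i ≠ j} y_i^t ≤ (1 − 1/k) · Σ_{i=1}^k y_i^{t+1}. -/
import Mathlib


namespace Stmt8

lemma young (t : ℕ) (a b : ℝ) (ha : 0 ≤ a) (hb : 0 ≤ b) :
    a * b ^ t ≤ (1 / ((t : ℝ) + 1)) * a ^ (t + 1) + ((t : ℝ) / ((t : ℝ) + 1)) * b ^ (t + 1) := by
  have htpos : (0 : ℝ) < (t : ℝ) + 1 := by positivity
  have hw : 1 / ((t : ℝ) + 1) + (t : ℝ) / ((t : ℝ) + 1) = 1 := by field_simp; ring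
  have h := Real.geom_mean_le_arith_mean2_weighted (by positivity) (by positivity)
    (by positivity : (0 : ℝ) ≤ a ^ (t + 1)) (by positivity : (0 : ℝ) ≤ b ^ (t + 1)) hw
  have h1 : (a ^ (t + 1)) ^ (1 / ((t : ℝ) + 1)) = a := by
    rw [← Real.rpow_natCast a (t + 1), ← Real.rpow_mul ha]
    push_cast
    rw [mul_one_div, div_self (ne_of_gt htpos), Real.rpow_one]
  have h2 : (b ^ (t + 1)) ^ ((t : ℝ) / ((t : ℝ) + 1)) = b ^ t := by
    rw [← Real.rpow_natCast b (t + 1), ← Real.rpow_mul hb]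
    push_cast
    have h3 : ((t : ℝ) + 1) * ((t : ℝ) / ((t : ℝ) + 1)) = (t : ℝ) := by field_simp
    rw [h3, Real.rpow_natCast]
  rw [h1, h2] at h
  linarith

/-- Key analytic inequality (weighted AM–GM + Hölder) for the randomized
algorithm for unconstrained monotone `k`-submodular maximization: for
nonnegative `y_1,…,y_k` and `t = k − 1`,
`y_j · Σ_{i ≠ j} y_i^t ≤ (1 − 1/k) · Σ_{i=1}^k y_i^{t+1}`. -/
theorem stmt8 (k t : ℕ) (hk : 2 ≤ k) (ht : t = k - 1) (y : ℕ → ℝ)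
    (hy : ∀ i ∈ Finset.Icc 1 k, 0 ≤ y i)
    (j : ℕ) (hj : j ∈ Finset.Icc 1 k) :
    y j * ∑ i ∈ (Finset.Icc 1 k).erase j, y i ^ t ≤
      (1 - 1 / (k : ℝ)) * ∑ i ∈ Finset.Icc 1 k, y i ^ (t + 1) := by
  have hkt : t + 1 = k := by omega
  set s := Finset.Icc 1 k with hs
  have hcard : (s.erase j).card = t := by
    rw [Finset.card_erase_of_mem hj, hs, Nat.card_Icc]; omega
  have hyj : 0 ≤ y j := hy j hj
  have hkR : ((t : ℝ) + 1) = (k : ℝ) := by exact_mod_cast hkt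
  have hk0 : (k : ℝ) ≠ 0 := by positivity
  have hcoef : (t : ℝ) / ((t : ℝ) + 1) = 1 - 1 / (k : ℝ) := by
    rw [hkR]
    have : (t : ℝ) = (k : ℝ) - 1 := by linarith [hkR]
    rw [this]
    field_simp
  calc y j * ∑ i ∈ s.erase j, y i ^ t
      = ∑ i ∈ s.erase j, y j * y i ^ t := by rw [Finset.mul_sum]
    _ ≤ ∑ i ∈ s.erase j, ((1 / ((t : ℝ) + 1)) * y j ^ (t + 1)
          + ((t : ℝ) / ((t : ℝ) + 1)) * y i ^ (t + 1)) := by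
        refine Finset.sum_le_sum fun i hi => ?_
        exact young t (y j) (y i) hyj (hy i (Finset.mem_of_mem_erase hi))
    _ = ((s.erase j).card : ℝ) * ((1 / ((t : ℝ) + 1)) * y j ^ (t + 1))
          + ((t : ℝ) / ((t : ℝ) + 1)) * ∑ i ∈ s.erase j, y i ^ (t + 1) := by
        rw [Finset.sum_add_distrib, Finset.sum_const, Finset.mul_sum, nsmul_eq_mul]
    _ = ((t : ℝ) / ((t : ℝ) + 1)) * ∑ i ∈ s, y i ^ (t + 1) := by
        rw [hcard, ← Finset.add_sum_erase s (fun i => y i ^ (t + 1)) hj]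
        ring
    _ = (1 - 1 / (k : ℝ)) * ∑ i ∈ s, y i ^ (t + 1) := by rw [hcoef]

end Stmt8
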